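/- Let G and A be r×K matrices over a field 𝔽 and let G' be the 2r×2K block matrix (G A; A G) (first block row (G A), second block row (A G)). If rank(G') = rank(G) = r, then there exists an r×r matrix C over 𝔽 such that A = C·G and C² = I (C is involutory). -/

import Mathlib

open Matrix

/-- If the block matrix `(G A; A G)` has the same rank `r` as the full-row-rank
`r × K` matrix `G`, then `A = C * G` for some involutory matrix `C`. -/
theorem exists_involutory_of_blocks_rank {r K : ℕ} {𝔽 : Type*} [Field 𝔽]
    (G A : Matrix (Fin r) (Fin K) 𝔽)
    (hrank : (Matrix.fromBlocks G A A G).rank = r) (hG : G.rank = r) :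
    ∃ C : Matrix (Fin r) (Fin r) 𝔽, A = C * G ∧ C * C = 1 := by
  classical
  -- rows of G are linearly independent
  have hGli : LinearIndependent 𝔽 G := by
    show LinearIndependent 𝔽 G.row
    rw [linearIndependent_iff_card_eq_finrank_span, Set.finrank,
      ← rank_eq_finrank_span_row, hG, Fintype.card_fin]
  -- cancellation lemma
  have hcancel : ∀ X Y : Matrix (Fin r) (Fin r) 𝔽, X * G = Y * G → X = Y := by
    intro X Y hXY
    ext j i
    have h := Fintype.linearIndependent_iff.mp hGli (fun i => X j i - Y j i) ?_ i
    · exact sub_eq_zero.mp h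
    · funext k
      have := congrFun (congrFun hXY j) k
      simp only [mul_apply] at this
      simp only [Finset.sum_apply, Pi.smul_apply, smul_eq_mul, Pi.zero_apply, sub_mul]
      rw [Finset.sum_sub_distrib]
      rw [sub_eq_zero]
      exact this
  set M := Matrix.fromBlocks G A A G with hM
  -- top rows of M
  set W : Submodule 𝔽 (Fin K ⊕ Fin K → 𝔽) := Submodule.span 𝔽 (Set.range M) with hW
  set W₁ : Submodule 𝔽 (Fin K ⊕ Fin K → 𝔽) :=
    Submodule.span 𝔽 (Set.range (fun i : Fin r => M (Sum.inl i))) with hW₁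
  have hle : W₁ ≤ W := Submodule.span_mono (by rintro x ⟨i, rfl⟩; exact ⟨Sum.inl i, rfl⟩)
  have hWfin : Module.finrank 𝔽 W = r := by
    rw [hW]
    show Module.finrank 𝔽 (Submodule.span 𝔽 (Set.range M.row)) = r
    rw [← rank_eq_finrank_span_row, hrank]
  -- projection onto first coordinates
  have hW₁ge : r ≤ Module.finrank 𝔽 W₁ := by
    let π : (Fin K ⊕ Fin K → 𝔽) →ₗ[𝔽] (Fin K → 𝔽) :=
      LinearMap.funLeft 𝔽 𝔽 Sum.inl
    have hmap : W₁.map π = Submodule.span 𝔽 (Set.range G) := by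
      rw [hW₁, Submodule.map_span]
      congr 1
      ext x
      constructor
      · rintro ⟨y, ⟨i, rfl⟩, rfl⟩
        exact ⟨i, rfl⟩
      · rintro ⟨i, rfl⟩
        exact ⟨M (Sum.inl i), ⟨i, rfl⟩, rfl⟩
    have h1 : Module.finrank 𝔽 (W₁.map π) ≤ Module.finrank 𝔽 W₁ :=
      Submodule.finrank_map_le π W₁
    rw [hmap] at h1
    change Module.finrank 𝔽 (Submodule.span 𝔽 (Set.range G.row)) ≤ _ at h1
    rw [← rank_eq_finrank_span_row, hG] at h1
    exact h1
  have hWeq : W₁ = W :=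
    Submodule.eq_of_le_of_finrank_le hle (by omega)
  -- every bottom row of M lies in W₁
  have key : ∀ j : Fin r, ∃ c : Fin r → 𝔽,
      ∑ i, c i • M (Sum.inl i) = M (Sum.inr j) := by
    intro j
    have hmem : M (Sum.inr j) ∈ W₁ := by
      rw [hWeq]
      exact Submodule.subset_span ⟨Sum.inr j, rfl⟩
    exact (Submodule.mem_span_range_iff_exists_fun 𝔽).mp hmem
  choose c hc using key
  refine ⟨Matrix.of c, ?_, ?_⟩
  · ext j k
    have := congrFun (hc j) (Sum.inl k)
    simp only [Finset.sum_apply, Pi.smul_apply, smul_eq_mul, hM,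
      fromBlocks_apply₁₁, fromBlocks_apply₂₁] at this
    simp only [mul_apply, Matrix.of_apply]
    exact this.symm
  · apply hcancel
    rw [Matrix.one_mul, Matrix.mul_assoc]
    have hCG : Matrix.of c * A = G := by
      ext j k
      have := congrFun (hc j) (Sum.inr k)
      simp only [Finset.sum_apply, Pi.smul_apply, smul_eq_mul, hM,
        fromBlocks_apply₁₂, fromBlocks_apply₂₂] at this
      simp only [mul_apply, Matrix.of_apply]
      exact this
    have hA : Matrix.of c * G = A := by
      ext j k
      have := congrFun (hc j) (Sum.inl k)
      simp only [Finset.sum_apply, Pi.smul_apply, smul_eq_mul, hM,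
        fromBlocks_apply₁₁, fromBlocks_apply₂₁] at this
      simp only [mul_apply, Matrix.of_apply]
      exact this
    rw [hA, hCG]
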